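/- Let r, r̂_V, μ̂ ∈ ℝ, σ > 0, s > 0, 𝒯 > 0, and set ν₁ := (μ̂ − r + σ²/2)/σ, ν₂ := ν₁ − σ. Assume r̂_V ≠ μ̂, r̂_V ≠ r, and c := 2(r̂_V − μ̂) + ν₁² > 0 (equivalently c = 2(r̂_V − r) + ν₂²). Then ∫_0^𝒯 e^{−r̂_V w} BS_C(s, s e^{r w}, w) dw = s ( Υ₀(𝒯, r̂_V − μ̂, ν₁) − Υ₀(𝒯, r̂_V − r, ν₂) ), where BS_C is the Black–Scholes call function with drift m = μ̂ and volatility σ. (This identity evaluates the call-recovery integral in the forward valuation at the at-the-money risk-free strike.) -/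

import Mathlib

open MeasureTheory intervalIntegral Real ProbabilityTheory Filter Asymptotics

/-- The standard Gaussian measure on ℝ. -/
noncomputable def gaussMeasure : Measure ℝ := gaussianReal 0 1

/-- The standard normal CDF. -/
noncomputable def Phi (x : ℝ) : ℝ :=
  ∫ u in Set.Iic x, Real.exp (-u ^ 2 / 2) / Real.sqrt (2 * Real.pi)

/-- The standard normal density. -/
noncomputable def gaussPdf (x : ℝ) : ℝ := Real.exp (-x ^ 2 / 2) / Real.sqrt (2 * Real.pi)

/-- Black–Scholes `d₁` with volatility `σ` and drift `m`. -/
noncomputable def d1 (σ m s k t : ℝ) : ℝ :=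
  (Real.log (s / k) + (m + σ ^ 2 / 2) * t) / (σ * Real.sqrt t)

/-- Black–Scholes `d₂` with volatility `σ` and drift `m`. -/
noncomputable def d2 (σ m s k t : ℝ) : ℝ := d1 σ m s k t - σ * Real.sqrt t

/-- Black–Scholes call price (undiscounted) with volatility `σ` and drift `m`. -/
noncomputable def BSC (σ m s k t : ℝ) : ℝ :=
  s * Real.exp (m * t) * Phi (d1 σ m s k t) - k * Phi (d2 σ m s k t)

/-- Black–Scholes put price (undiscounted) with volatility `σ` and drift `m`. -/
noncomputable def BSP (σ m s k t : ℝ) : ℝ :=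
  k * Phi (-d2 σ m s k t) - s * Real.exp (m * t) * Phi (-d1 σ m s k t)

/-- The function `Υ₀` from the ATM forward valuation formula. -/
noncomputable def Ups0 (t x y : ℝ) : ℝ :=
  y / (x * Real.sqrt (2 * x + y ^ 2)) * (Phi (Real.sqrt ((2 * x + y ^ 2) * t)) - 1 / 2)
    - 1 / x * (Real.exp (-x * t) * Phi (y * Real.sqrt t) - 1 / 2)

/-- The second-order approximation `Υ̃` of the generalized `Υ` function. -/
noncomputable def UpsTilde (t x y z : ℝ) : ℝ :=
  Ups0 t x y
    + 2 / Real.sqrt (2 * x + y ^ 2) * (Phi (Real.sqrt ((2 * x + y ^ 2) * t)) - 1 / 2)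
      * (z - y / 2 * z ^ 2)

/-- Covariance of two real random variables. -/
noncomputable def cov {Ω : Type*} [MeasurableSpace Ω] (P : Measure Ω) (X Y : Ω → ℝ) : ℝ :=
  (∫ ω, X ω * Y ω ∂P) - (∫ ω, X ω ∂P) * (∫ ω, Y ω ∂P)

/-- Variance of a real random variable. -/
noncomputable def var {Ω : Type*} [MeasurableSpace Ω] (P : Measure Ω) (X : Ω → ℝ) : ℝ :=
  cov P X X

/-- Correlation of two real random variables. -/
noncomputable def corr {Ω : Type*} [MeasurableSpace Ω] (P : Measure Ω) (X Y : Ω → ℝ) : ℝ :=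
  cov P X Y / Real.sqrt (var P X * var P Y)

lemma gaussPdf_continuous : Continuous gaussPdf := by
  unfold gaussPdf
  fun_prop

lemma integrable_gaussPdf : Integrable gaussPdf := by
  have h : Integrable (fun x : ℝ => Real.exp (-(1/2 : ℝ) * x ^ 2)) :=
    integrable_exp_neg_mul_sq (by norm_num)
  have h2 := h.div_const (Real.sqrt (2 * Real.pi))
  convert h2 using 2 with u
  unfold gaussPdf
  ring_nf

lemma Phi_eq (x : ℝ) : Phi x = ∫ u in Set.Iic x, gaussPdf u := rfl

lemma hasDerivAt_Phi (x : ℝ) : HasDerivAt Phi (gaussPdf x) x := by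
  have key : Phi = fun y => Phi 0 + ∫ u in (0:ℝ)..y, gaussPdf u := by
    funext y
    rw [Phi_eq, Phi_eq,
      ← intervalIntegral.integral_Iic_sub_Iic integrable_gaussPdf.integrableOn
        integrable_gaussPdf.integrableOn]
    ring
  have h := intervalIntegral.integral_hasDerivAt_right
    (a := 0) (b := x) integrable_gaussPdf.intervalIntegrable
    (gaussPdf_continuous.stronglyMeasurable.stronglyMeasurableAtFilter)
    gaussPdf_continuous.continuousAt
  rw [key]
  simpa using h.const_add (Phi 0)

@[fun_prop]
lemma continuous_Phi : Continuous Phi :=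
  continuous_iff_continuousAt.2 fun x => (hasDerivAt_Phi x).continuousAt

lemma Phi_zero : Phi 0 = 1 / 2 := by
  have htot : ∫ u : ℝ, gaussPdf u = 1 := by
    unfold gaussPdf
    rw [MeasureTheory.integral_div]
    have h : ∫ u : ℝ, Real.exp (-(1/2:ℝ) * u ^ 2) = Real.sqrt (Real.pi / (1/2)) :=
      integral_gaussian (1/2)
    have : ∫ u : ℝ, Real.exp (-u ^ 2 / 2) = Real.sqrt (2 * Real.pi) := by
      rw [show (Real.sqrt (2 * Real.pi)) = Real.sqrt (Real.pi / (1/2)) by norm_num [mul_comm], ← h]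
      congr 1; funext u; ring_nf
    rw [this, div_self (by positivity)]
  have hsym : ∫ u in Set.Iic (0:ℝ), gaussPdf u = ∫ u in Set.Ioi (0:ℝ), gaussPdf u := by
    have := integral_comp_neg_Iic (0:ℝ) gaussPdf
    rw [neg_zero] at this
    rw [← this]
    congr 1; funext u; unfold gaussPdf; ring_nf
  have hsplit : (∫ u in Set.Iic (0:ℝ), gaussPdf u) + ∫ u in Set.Ioi (0:ℝ), gaussPdf u = 1 := by
    rw [← htot, ← MeasureTheory.integral_add_compl (measurableSet_Iic (a := (0:ℝ)))
      integrable_gaussPdf, Set.compl_Iic]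
  rw [Phi_eq]
  linarith [hsym, hsplit]

lemma key_integral (x y T : ℝ) (hx : x ≠ 0) (hc : 0 < 2 * x + y ^ 2) (hT : 0 ≤ T) :
    ∫ w in (0:ℝ)..T, Real.exp (-x * w) * Phi (y * Real.sqrt w)
      = y / (x * Real.sqrt (2 * x + y ^ 2))
          * (Phi (Real.sqrt ((2 * x + y ^ 2) * T)) - 1 / 2)
        - 1 / x * (Real.exp (-x * T) * Phi (y * Real.sqrt T) - 1 / 2) := by
  set c := 2 * x + y ^ 2 with hcdef
  set F : ℝ → ℝ := fun w => y / (x * Real.sqrt c) * Phi (Real.sqrt (c * w))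
      - 1 / x * (Real.exp (-x * w) * Phi (y * Real.sqrt w)) with hF
  have hconti : Continuous fun w => Real.exp (-x * w) * Phi (y * Real.sqrt w) := by
    fun_prop
  have hFc : ContinuousOn F (Set.Icc 0 T) := by
    apply Continuous.continuousOn
    unfold F
    fun_prop
  have hder : ∀ w ∈ Set.Ioo (0:ℝ) T,
      HasDerivWithinAt F (Real.exp (-x * w) * Phi (y * Real.sqrt w)) (Set.Ioi w) w := by
    intro w hw
    have hw0 : 0 < w := hw.1
    have hsw : 0 < Real.sqrt w := Real.sqrt_pos.2 hw0
    have hsc : 0 < Real.sqrt c := Real.sqrt_pos.2 hc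
    have hs : HasDerivAt Real.sqrt (1 / (2 * Real.sqrt w)) w := Real.hasDerivAt_sqrt hw0.ne'
    have h1 : HasDerivAt (fun w => Phi (y * Real.sqrt w))
        (gaussPdf (y * Real.sqrt w) * (y * (1 / (2 * Real.sqrt w)))) w :=
      (hasDerivAt_Phi _).comp w (hs.const_mul y)
    have h2 : HasDerivAt (fun w => Real.exp (-x * w)) (Real.exp (-x * w) * (-x)) w := by
      simpa using ((hasDerivAt_id w).const_mul (-x)).exp
    have hsc2 : HasDerivAt (fun w => Real.sqrt (c * w))
        (1 / (2 * Real.sqrt (c * w)) * c) w := by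
      simpa [Function.comp_def] using
        (Real.hasDerivAt_sqrt (show c * w ≠ 0 by positivity)).comp w
          ((hasDerivAt_id w).const_mul c)
    have h3 : HasDerivAt (fun w => Phi (Real.sqrt (c * w)))
        (gaussPdf (Real.sqrt (c * w)) * (1 / (2 * Real.sqrt (c * w)) * c)) w :=
      (hasDerivAt_Phi _).comp w hsc2
    have hF' : HasDerivAt F
        (y / (x * Real.sqrt c) * (gaussPdf (Real.sqrt (c * w)) * (1 / (2 * Real.sqrt (c * w)) * c))
         - 1 / x * (Real.exp (-x * w) * (-x) * Phi (y * Real.sqrt w)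
            + Real.exp (-x * w) * (gaussPdf (y * Real.sqrt w) * (y * (1 / (2 * Real.sqrt w)))))) w :=
      ((h3.const_mul _).sub ((h2.mul h1).const_mul (1 / x)))
    have e2 : Real.exp (-x * w) * gaussPdf (y * Real.sqrt w)
        = Real.exp (-(c * w) / 2) / Real.sqrt (2 * Real.pi) := by
      unfold gaussPdf
      rw [div_eq_mul_inv (Real.exp _), ← mul_assoc, ← Real.exp_add, ← div_eq_mul_inv]
      congr 2
      rw [mul_pow, Real.sq_sqrt hw0.le, hcdef]; ring
    have e1 : gaussPdf (Real.sqrt (c * w)) = Real.exp (-(c * w) / 2) / Real.sqrt (2 * Real.pi) := by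
      unfold gaussPdf
      rw [Real.sq_sqrt (by positivity)]
    have e5 : gaussPdf (Real.sqrt (c * w))
        = Real.exp (-x * w) * gaussPdf (y * Real.sqrt w) := e1.trans e2.symm
    have e3 : Real.sqrt (c * w) = Real.sqrt c * Real.sqrt w := Real.sqrt_mul hc.le w
    have heq : (y / (x * Real.sqrt c) * (gaussPdf (Real.sqrt (c * w)) * (1 / (2 * Real.sqrt (c * w)) * c))
         - 1 / x * (Real.exp (-x * w) * (-x) * Phi (y * Real.sqrt w)
            + Real.exp (-x * w) * (gaussPdf (y * Real.sqrt w) * (y * (1 / (2 * Real.sqrt w))))))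
        = Real.exp (-x * w) * Phi (y * Real.sqrt w) := by
      rw [e5, e3]
      set a := Real.sqrt c with ha
      set b := Real.sqrt w with hb
      have e4 : a * a = c := Real.mul_self_sqrt hc.le
      rw [← e4]
      field_simp
      ring
    rw [← heq]
    exact hF'.hasDerivWithinAt
  have hint : IntervalIntegrable (fun w => Real.exp (-x * w) * Phi (y * Real.sqrt w))
      volume 0 T := hconti.intervalIntegrable _ _
  rw [intervalIntegral.integral_eq_sub_of_hasDeriv_right_of_le hT hFc hder hint]
  have hFT : F T = y / (x * Real.sqrt c) * Phi (Real.sqrt (c * T))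
      - 1 / x * (Real.exp (-x * T) * Phi (y * Real.sqrt T)) := rfl
  have hF0 : F 0 = y / (x * Real.sqrt c) * (1/2) - 1 / x * (1/2) := by
    simp [hF, Phi_zero]
  rw [hFT, hF0]
  ring

/-- The call-recovery integral in the forward valuation at the at-the-money
risk-free strike, in terms of `Υ₀`. -/
theorem call_recovery_integral_ATMRF
    (r rV μ σ s 𝒯 : ℝ) (hσ : 0 < σ) (hs : 0 < s) (hT : 0 < 𝒯)
    (ν1 ν2 : ℝ) (hν1 : ν1 = (μ - r + σ ^ 2 / 2) / σ) (hν2 : ν2 = ν1 - σ)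
    (h1 : rV ≠ μ) (h2 : rV ≠ r) (hc : 0 < 2 * (rV - μ) + ν1 ^ 2) :
    ∫ w in (0 : ℝ)..𝒯, Real.exp (-rV * w) * BSC σ μ s (s * Real.exp (r * w)) w
      = s * (Ups0 𝒯 (rV - μ) ν1 - Ups0 𝒯 (rV - r) ν2) := by
  have hx1 : rV - μ ≠ 0 := sub_ne_zero.mpr h1
  have hx2 : rV - r ≠ 0 := sub_ne_zero.mpr h2
  have hσ' := hσ.ne'
  have hceq : 2 * (rV - r) + ν2 ^ 2 = 2 * (rV - μ) + ν1 ^ 2 := by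
    subst hν2; subst hν1; field_simp; ring
  have hc2 : 0 < 2 * (rV - r) + ν2 ^ 2 := by rw [hceq]; exact hc
  have hcongr : ∀ w ∈ Set.uIcc (0:ℝ) 𝒯,
      Real.exp (-rV * w) * BSC σ μ s (s * Real.exp (r * w)) w
        = s * (Real.exp (-(rV - μ) * w) * Phi (ν1 * Real.sqrt w))
          - s * (Real.exp (-(rV - r) * w) * Phi (ν2 * Real.sqrt w)) := by
    intro w hw
    rw [Set.uIcc_of_le hT.le] at hw
    rcases eq_or_lt_of_le hw.1 with h0 | h0
    · simp [← h0, BSC, d1, d2]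
    · have hsw : 0 < Real.sqrt w := Real.sqrt_pos.2 h0
      have hww : Real.sqrt w * Real.sqrt w = w := Real.mul_self_sqrt h0.le
      have hlog : Real.log (s / (s * Real.exp (r * w))) = -(r * w) := by
        rw [show s / (s * Real.exp (r * w)) = (Real.exp (r * w))⁻¹ by
          field_simp, Real.log_inv, Real.log_exp]
      have hd1 : d1 σ μ s (s * Real.exp (r * w)) w = ν1 * Real.sqrt w := by
        rw [d1, hlog, hν1]
        field_simp
        linear_combination (2*r - 2*μ - σ^2) * hww
      have hd2 : d2 σ μ s (s * Real.exp (r * w)) w = ν2 * Real.sqrt w := by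
        rw [d2, hd1, hν2]; ring
      rw [BSC, hd1, hd2]
      have E1 : Real.exp (-rV * w) * Real.exp (μ * w) = Real.exp (-(rV - μ) * w) := by
        rw [← Real.exp_add]; ring_nf
      have E2 : Real.exp (-rV * w) * Real.exp (r * w) = Real.exp (-(rV - r) * w) := by
        rw [← Real.exp_add]; ring_nf
      linear_combination s * Phi (ν1 * Real.sqrt w) * E1 - s * Phi (ν2 * Real.sqrt w) * E2
  rw [intervalIntegral.integral_congr hcongr]
  have c1 : Continuous fun w => Real.exp (-(rV - μ) * w) * Phi (ν1 * Real.sqrt w) := by fun_prop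
  have c2 : Continuous fun w => Real.exp (-(rV - r) * w) * Phi (ν2 * Real.sqrt w) := by fun_prop
  rw [intervalIntegral.integral_sub (show IntervalIntegrable (fun w => s * (Real.exp (-(rV - μ) * w) * Phi (ν1 * Real.sqrt w))) volume 0 𝒯 from
        (continuous_const.mul c1).intervalIntegrable (μ := volume) _ _)
      (show IntervalIntegrable (fun w => s * (Real.exp (-(rV - r) * w) * Phi (ν2 * Real.sqrt w))) volume 0 𝒯 from
        (continuous_const.mul c2).intervalIntegrable (μ := volume) _ _),
    intervalIntegral.integral_const_mul, intervalIntegral.integral_const_mul,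
    key_integral (rV - μ) ν1 𝒯 hx1 hc hT.le, key_integral (rV - r) ν2 𝒯 hx2 hc2 hT.le]
  simp only [Ups0]
  ring
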